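/- Let a, b ∈ ℚ with -4a³ - 27b² ≠ 0 and let θ₁, θ₂, θ₃ ∈ ℂ be the (necessarily distinct) roots of x³ + ax + b. Then for all t, a₀, a₁, a₂ ∈ ℚ, the three equations f₁ = 0, g₁ = 0, h₁ = 0 hold simultaneously if and only if for every j ∈ {1,2,3} one has (a₀ + a₁θⱼ + a₂θⱼ²)² = t² - (2/3)θⱼ·t - (2θⱼ² + a)/9. -/
import Mathlib


/-- Theorem 1.1 of the paper: the defining equations of `X_E(8)` hold iff the
coefficient-comparison identity holds at each root of `x³ + ax + b`. -/
theorem stmt_0 (a b : ℚ) (hD : -4 * a ^ 3 - 27 * b ^ 2 ≠ 0)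
    (θ₁ θ₂ θ₃ : ℂ)
    (hroots : ∀ x : ℂ, x ^ 3 + (a : ℂ) * x + (b : ℂ) = (x - θ₁) * (x - θ₂) * (x - θ₃))
    (t a₀ a₁ a₂ : ℚ) :
    (-a * a₂ ^ 2 + 2 * a₀ * a₂ + a₁ ^ 2 + 2 / 9 = 0 ∧
      -2 * a * a₁ * a₂ - b * a₂ ^ 2 + 2 * a₀ * a₁ + 2 / 3 * t = 0 ∧
      -2 * b * a₁ * a₂ + a₀ ^ 2 - t ^ 2 + a / 9 = 0) ↔
    ∀ θ ∈ ({θ₁, θ₂, θ₃} : Set ℂ),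
      ((a₀ : ℂ) + (a₁ : ℂ) * θ + (a₂ : ℂ) * θ ^ 2) ^ 2 =
        (t : ℂ) ^ 2 - 2 / 3 * θ * (t : ℂ) - (2 * θ ^ 2 + (a : ℂ)) / 9 := by
  -- root equations
  have r1 : θ₁ ^ 3 + (a : ℂ) * θ₁ + (b : ℂ) = 0 := by rw [hroots]; ring
  have r2 : θ₂ ^ 3 + (a : ℂ) * θ₂ + (b : ℂ) = 0 := by rw [hroots]; ring
  have r3 : θ₃ ^ 3 + (a : ℂ) * θ₃ + (b : ℂ) = 0 := by rw [hroots]; ring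
  -- symmetric function relations
  have e2 : θ₁ * θ₂ + θ₁ * θ₃ + θ₂ * θ₃ = (a : ℂ) := by
    linear_combination (hroots (-1) - hroots 1) / 2
  have e3 : θ₁ * θ₂ * θ₃ = -(b : ℂ) := by linear_combination hroots 0
  have e1 : θ₁ + θ₂ + θ₃ = 0 := by linear_combination hroots 1 + e2 - e3
  -- discriminant identity and distinctness of the roots
  have hd : ((θ₁ - θ₂) * (θ₁ - θ₃) * (θ₂ - θ₃)) ^ 2 =
      (-4 * (a : ℂ) ^ 3 - 27 * (b : ℂ) ^ 2) := by
    have h3 : θ₃ = -θ₁ - θ₂ := by linear_combination e1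
    subst h3
    set A : ℂ := -(θ₁ ^ 2 + θ₁ * θ₂ + θ₂ ^ 2) with hA
    set B : ℂ := θ₁ ^ 2 * θ₂ + θ₁ * θ₂ ^ 2 with hB
    linear_combination (-4 * ((a : ℂ) ^ 2 + (a : ℂ) * A + A ^ 2)) * e2 +
      (27 * ((b : ℂ) + B)) * e3
  have hdc : ((θ₁ - θ₂) * (θ₁ - θ₃) * (θ₂ - θ₃)) ^ 2 ≠ 0 := by
    rw [hd]
    intro h
    apply hD
    have : ((-4 * a ^ 3 - 27 * b ^ 2 : ℚ) : ℂ) = 0 := by push_cast; linear_combination h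
    exact_mod_cast this
  have h12 : θ₁ - θ₂ ≠ 0 := fun h => hdc (by rw [h]; ring)
  have h13 : θ₁ - θ₃ ≠ 0 := fun h => hdc (by rw [h]; ring)
  have h23 : θ₂ - θ₃ ≠ 0 := fun h => hdc (by rw [h]; ring)
  constructor
  · rintro ⟨hf, hg, hh⟩ θ hθ
    have hfC : (-(a : ℂ) * a₂ ^ 2 + 2 * a₀ * a₂ + a₁ ^ 2 + 2 / 9 : ℂ) = 0 := by
      have h := congrArg (fun x : ℚ => (x : ℂ)) hf; push_cast at h; linear_combination h
    have hgC : (-2 * (a : ℂ) * a₁ * a₂ - b * a₂ ^ 2 + 2 * a₀ * a₁ + 2 / 3 * t : ℂ) = 0 := by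
      have h := congrArg (fun x : ℚ => (x : ℂ)) hg; push_cast at h; linear_combination h
    have hhC : (-2 * (b : ℂ) * a₁ * a₂ + a₀ ^ 2 - t ^ 2 + a / 9 : ℂ) = 0 := by
      have h := congrArg (fun x : ℚ => (x : ℂ)) hh; push_cast at h; linear_combination h
    have rθ : θ ^ 3 + (a : ℂ) * θ + (b : ℂ) = 0 := by
      rcases hθ with h | h | h <;> subst h <;> assumption
    linear_combination ((a₂ : ℂ) ^ 2 * θ + 2 * a₁ * a₂) * rθ + θ ^ 2 * hfC + θ * hgC + hhC
  · intro H
    set F : ℂ := (-(a : ℂ) * a₂ ^ 2 + 2 * a₀ * a₂ + a₁ ^ 2 + 2 / 9 : ℂ) with hF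
    set G : ℂ := (-2 * (a : ℂ) * a₁ * a₂ - b * a₂ ^ 2 + 2 * a₀ * a₁ + 2 / 3 * t : ℂ) with hG
    set Hc : ℂ := (-2 * (b : ℂ) * a₁ * a₂ + a₀ ^ 2 - t ^ 2 + a / 9 : ℂ) with hHc
    have E1 : F * θ₁ ^ 2 + G * θ₁ + Hc = 0 := by
      have I := H θ₁ (by left; rfl)
      linear_combination I - ((a₂ : ℂ) ^ 2 * θ₁ + 2 * a₁ * a₂) * r1
    have E2 : F * θ₂ ^ 2 + G * θ₂ + Hc = 0 := by
      have I := H θ₂ (by right; left; rfl)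
      linear_combination I - ((a₂ : ℂ) ^ 2 * θ₂ + 2 * a₁ * a₂) * r2
    have E3 : F * θ₃ ^ 2 + G * θ₃ + Hc = 0 := by
      have I := H θ₃ (by right; right; rfl)
      linear_combination I - ((a₂ : ℂ) ^ 2 * θ₃ + 2 * a₁ * a₂) * r3
    have L12 : F * (θ₁ + θ₂) + G = 0 := by
      have h : (θ₁ - θ₂) * (F * (θ₁ + θ₂) + G) = (θ₁ - θ₂) * 0 := by
        linear_combination E1 - E2
      exact mul_left_cancel₀ h12 h
    have L13 : F * (θ₁ + θ₃) + G = 0 := by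
      have h : (θ₁ - θ₃) * (F * (θ₁ + θ₃) + G) = (θ₁ - θ₃) * 0 := by
        linear_combination E1 - E3
      exact mul_left_cancel₀ h13 h
    have hF0 : F = 0 := by
      have h : (θ₂ - θ₃) * F = (θ₂ - θ₃) * 0 := by linear_combination L12 - L13
      exact mul_left_cancel₀ h23 h
    have hG0 : G = 0 := by linear_combination L12 - (θ₁ + θ₂) * hF0
    have hH0 : Hc = 0 := by linear_combination E1 - θ₁ ^ 2 * hF0 - θ₁ * hG0
    have inj : Function.Injective (Rat.cast : ℚ → ℂ) := Rat.cast_injective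
    refine ⟨inj ?_, inj ?_, inj ?_⟩
    · push_cast; linear_combination hF0
    · push_cast; linear_combination hG0
    · push_cast; linear_combination hH0
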